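/- Let U be a Polish space, let Ū = U ⊔ {†} be the Polish space obtained from U by adjoining an isolated point † ('death state'), and let κ be a Markov kernel on Ū that is strong Feller, absorbing at † (i.e. κ(†,{†}) = 1), and irreducible on U in the sense that κ(u, A) > 0 for every u ∈ U and every nonempty open set A ⊆ U. Then κ admits at most one invariant probability measure μ with μ(U) = 1. -/

import Mathlib

open MeasureTheory ProbabilityTheory
open scoped ENNReal

/-- A Markov kernel is *strong Feller* if it maps bounded Borel measurable functions to
bounded continuous functions. -/
def IsStrongFeller {X : Type*} [TopologicalSpace X] [MeasurableSpace X]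
    (κ : Kernel X X) : Prop :=
  ∀ ψ : X → ℝ, Measurable ψ → (∃ C, ∀ x, |ψ x| ≤ C) →
    Continuous fun x => ∫ y, ψ y ∂(κ x)

/-- A measure `μ` is *invariant* for the kernel `κ` if `μ A = ∫ κ(x, A) μ(dx)` for every
Borel set `A`. -/
def KernelInvariant {X : Type*} [MeasurableSpace X] (κ : Kernel X X) (μ : Measure X) : Prop :=
  ∀ A : Set X, MeasurableSet A → μ A = ∫⁻ x, κ x A ∂μ

private lemma ennreal_le_pair {a b c d : ℝ≥0∞} (h1 : a ≤ c) (h2 : b ≤ d)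
    (hc : c ≠ ⊤) (hd : d ≠ ⊤) (h : c + d ≤ a + b) : c ≤ a ∧ d ≤ b := by
  constructor
  · have h' : c + d ≤ a + d := h.trans (add_le_add_right h2 a)
    exact (ENNReal.add_le_add_iff_right hd).mp h'
  · have h' : c + d ≤ c + b := h.trans (add_le_add_left h1 b)
    exact (ENNReal.add_le_add_iff_left hc).mp h'

private lemma inter_eq_of_hahn {X : Type*} [MeasurableSpace X] (μ ν : Measure X)
    [IsFiniteMeasure μ] {A T : Set X} (hA : MeasurableSet A) (hT : MeasurableSet T)
    (hTeq : μ T = ν T) (hmon : ∀ t, MeasurableSet t → t ⊆ T → ν t ≤ μ t) :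
    μ (A ∩ T) = ν (A ∩ T) := by
  have h1 : ν (A ∩ T) ≤ μ (A ∩ T) := hmon _ (hA.inter hT) Set.inter_subset_right
  have h2 : ν (T \ A) ≤ μ (T \ A) := hmon _ (hT.diff hA) Set.diff_subset
  have e1 : μ (A ∩ T) + μ (T \ A) = μ T := by
    rw [Set.inter_comm]; exact measure_inter_add_diff T hA
  have e2 : ν (A ∩ T) + ν (T \ A) = ν T := by
    rw [Set.inter_comm]; exact measure_inter_add_diff T hA
  have hsum : μ (A ∩ T) + μ (T \ A) ≤ ν (A ∩ T) + ν (T \ A) := by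
    rw [e1, e2, hTeq]
  exact le_antisymm ((ennreal_le_pair h1 h2 (measure_ne_top μ _) (measure_ne_top μ _)
    hsum).1) h1

private lemma eq_of_hahn {X : Type*} [MeasurableSpace X] (μ ν : Measure X)
    [IsFiniteMeasure μ] [IsFiniteMeasure ν]
    (htot : μ Set.univ = ν Set.univ) {S : Set X} (hS : MeasurableSet S)
    (hin : ∀ t, MeasurableSet t → t ⊆ S → ν t ≤ μ t)
    (hout : ∀ t, MeasurableSet t → t ⊆ Sᶜ → μ t ≤ ν t)
    (hback : μ S ≤ ν S) : μ = ν := by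
  have hSeq : μ S = ν S := le_antisymm hback (hin S hS subset_rfl)
  have hCeq : μ Sᶜ = ν Sᶜ := by
    have h1 := measure_add_measure_compl (μ := μ) hS
    have h2 := measure_add_measure_compl (μ := ν) hS
    rw [htot, ← h2, hSeq] at h1
    exact (ENNReal.add_right_inj (measure_ne_top ν S)).mp h1
  ext A hA
  have hsplit : ∀ ρ : Measure X, ρ (A ∩ S) + ρ (A ∩ Sᶜ) = ρ A := by
    intro ρ
    rw [← Set.diff_eq, measure_inter_add_diff A hS]
  rw [← hsplit μ, ← hsplit ν,
    inter_eq_of_hahn μ ν hA hS hSeq hin,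
    inter_eq_of_hahn ν μ hA hS.compl hCeq.symm hout]

private lemma sub_invariant {X : Type*} [MeasurableSpace X] (κ : Kernel X X) [IsMarkovKernel κ]
    (μ ν : Measure X) [IsFiniteMeasure μ] [IsFiniteMeasure ν]
    (hμ : KernelInvariant κ μ) (hν : KernelInvariant κ ν)
    {S : Set X} (hS : MeasurableSet S)
    (hin : ∀ t, MeasurableSet t → t ⊆ S → ν t ≤ μ t)
    (hout : ∀ t, MeasurableSet t → t ⊆ Sᶜ → μ t ≤ ν t) :
    KernelInvariant κ (μ.restrict S - ν.restrict S) := by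
  have hle : ν.restrict S ≤ μ.restrict S := by
    refine Measure.le_iff.mpr fun A hA => ?_
    rw [Measure.restrict_apply hA, Measure.restrict_apply hA]
    exact hin _ (hA.inter hS) Set.inter_subset_right
  have hle2 : μ.restrict Sᶜ ≤ ν.restrict Sᶜ := by
    refine Measure.le_iff.mpr fun A hA => ?_
    rw [Measure.restrict_apply hA, Measure.restrict_apply hA]
    exact hout _ (hA.inter hS.compl) Set.inter_subset_right
  set p := μ.restrict S - ν.restrict S with hp
  have hpadd : p + ν.restrict S = μ.restrict S := Measure.sub_add_cancel_of_le hle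
  have hplint : ∀ f : X → ℝ≥0∞, (∀ x, f x ≤ 1) →
      ∫⁻ x, f x ∂p = (∫⁻ x in S, f x ∂μ) - ∫⁻ x in S, f x ∂ν := by
    intro f hf
    have hfin : ∫⁻ x in S, f x ∂ν ≠ ⊤ := by
      have h1 : ∫⁻ x in S, f x ∂ν ≤ ∫⁻ _x in S, (1 : ℝ≥0∞) ∂ν := lintegral_mono fun x => hf x
      rw [setLIntegral_one] at h1
      exact (h1.trans_lt (measure_lt_top ν S)).ne
    have h := lintegral_add_measure f p (ν.restrict S)
    rw [hpadd] at h
    exact ENNReal.eq_sub_of_add_eq hfin h.symm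
  have hpfin : p Set.univ ≠ ⊤ := by
    have : p Set.univ ≤ μ.restrict S Set.univ := Measure.le_iff'.mp Measure.sub_le Set.univ
    rw [Measure.restrict_apply_univ] at this
    exact (this.trans_lt (measure_lt_top μ S)).ne
  intro A hA
  set I : Set X → ℝ≥0∞ := fun B => ∫⁻ x, κ x B ∂p with hI
  have hItop : ∀ B : Set X, I B ≠ ⊤ := by
    intro B
    have h1 : I B ≤ ∫⁻ _x, (1 : ℝ≥0∞) ∂p := lintegral_mono fun x => prob_le_one
    rw [lintegral_one] at h1
    exact fun h => hpfin (top_le_iff.mp (h ▸ h1))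
  have hIle : ∀ B : Set X, MeasurableSet B → p B ≤ I B := by
    intro B hB
    have h1 : p B = μ (B ∩ S) - ν (B ∩ S) := by
      rw [hp, Measure.sub_apply hB hle, Measure.restrict_apply hB, Measure.restrict_apply hB]
    set a := ∫⁻ x in S, κ x (B ∩ S) ∂μ with ha
    set b := ∫⁻ x in Sᶜ, κ x (B ∩ S) ∂μ with hb
    set c := ∫⁻ x in S, κ x (B ∩ S) ∂ν with hc
    set d := ∫⁻ x in Sᶜ, κ x (B ∩ S) ∂ν with hd
    have hdfin : d ≠ ⊤ := by
      have h2 : d ≤ ∫⁻ _x in Sᶜ, (1 : ℝ≥0∞) ∂ν := lintegral_mono fun x => prob_le_one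
      rw [setLIntegral_one] at h2
      exact (h2.trans_lt (measure_lt_top ν Sᶜ)).ne
    have hbd : b ≤ d := lintegral_mono' hle2 le_rfl
    have hμsplit : ∫⁻ x, κ x (B ∩ S) ∂μ = a + b := (lintegral_add_compl _ hS).symm
    have hνsplit : ∫⁻ x, κ x (B ∩ S) ∂ν = c + d := (lintegral_add_compl _ hS).symm
    calc p B = (a + b) - (c + d) := by
          rw [h1, hμ _ (hB.inter hS), hν _ (hB.inter hS), hμsplit, hνsplit]
      _ ≤ (a + d) - (c + d) := tsub_le_tsub_right (add_le_add_right hbd a) _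
      _ = a + d - d - c := by rw [add_comm c d, tsub_add_eq_tsub_tsub]
      _ = a - c := by rw [ENNReal.add_sub_cancel_right hdfin]
      _ = ∫⁻ x, κ x (B ∩ S) ∂p := (hplint _ fun x => prob_le_one).symm
      _ ≤ I B := lintegral_mono fun x => measure_mono Set.inter_subset_left
  have hIadd : I A + I Aᶜ = p Set.univ := by
    rw [hI]
    rw [← lintegral_add_left (Kernel.measurable_coe κ hA)]
    have h1 : ∀ x, κ x A + κ x Aᶜ = 1 := fun x => by
      rw [measure_add_measure_compl hA, measure_univ]
    simp only [h1, lintegral_one]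
  have hsum : I A + I Aᶜ ≤ p A + p Aᶜ := by
    rw [hIadd, measure_add_measure_compl hA]
  exact le_antisymm (hIle A hA)
    (ennreal_le_pair (hIle A hA) (hIle Aᶜ hA.compl) (hItop A) (hItop Aᶜ) hsum).1

private lemma kernel_eq_one_on_inl {U : Type*} [TopologicalSpace U]
    [MeasurableSpace (U ⊕ Unit)] [BorelSpace (U ⊕ Unit)]
    (κ : Kernel (U ⊕ Unit) (U ⊕ Unit)) [IsMarkovKernel κ]
    (hSF : IsStrongFeller κ)
    (hirr : ∀ u : U, ∀ A : Set (U ⊕ Unit),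
      IsOpen A → A ⊆ Set.range Sum.inl → A.Nonempty → 0 < κ (Sum.inl u) A)
    (p : Measure (U ⊕ Unit)) (hpfin : p Set.univ ≠ ⊤)
    (hpI : KernelInvariant κ p)
    (hpU : p (Set.range Sum.inl)ᶜ = 0)
    (hp0 : p Set.univ ≠ 0)
    (B : Set (U ⊕ Unit)) (hB : MeasurableSet B) (hBfull : p Bᶜ = 0) :
    ∀ u : U, κ (Sum.inl u) B = 1 := by
  set g : (U ⊕ Unit) → ℝ := fun x => ∫ y, B.indicator (fun _ => (1 : ℝ)) y ∂(κ x) with hg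
  have hgcont : Continuous g := by
    refine hSF _ (measurable_const.indicator hB) ⟨1, fun x => ?_⟩
    by_cases hx : x ∈ B <;> simp [Set.indicator_apply, hx]
  have hgeq : ∀ x, g x = (κ x B).toReal := fun x => integral_indicator_one hB
  -- κ x B = 1 p-a.e.
  have hpB : p B = p Set.univ := by
    refine le_antisymm (measure_mono (Set.subset_univ _)) ?_
    calc p Set.univ ≤ p B + p Bᶜ := measure_univ_le_add_compl B
      _ = p B := by rw [hBfull, add_zero]
  have hae : ∀ᵐ x ∂p, κ x B = 1 := by
    have hmeas : Measurable fun x => κ x B := Kernel.measurable_coe κ hB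
    have hfin : ∫⁻ x, κ x B ∂p ≠ ⊤ := by
      rw [← hpI B hB]
      exact fun h => hpfin (top_le_iff.mp (h ▸ measure_mono (Set.subset_univ B)))
    have hz : ∫⁻ x, (1 - κ x B) ∂p = 0 := by
      rw [lintegral_sub hmeas hfin (Filter.Eventually.of_forall fun x => prob_le_one),
        lintegral_one, ← hpI B hB, hpB, tsub_self]
    have h := (lintegral_eq_zero_iff (measurable_const.sub hmeas)).mp hz
    filter_upwards [h] with x hx
    have h1 : (1 : ℝ≥0∞) ≤ κ x B := by
      simp only [Pi.zero_apply, Pi.sub_apply, tsub_eq_zero_iff_le] at hx; exact hx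
    exact le_antisymm prob_le_one h1
  -- the bad set
  set V : Set (U ⊕ Unit) := {x | g x ≠ 1} ∩ Set.range Sum.inl with hV
  have hVopen : IsOpen V := by
    refine IsOpen.inter ?_ isOpen_range_inl
    have : {x | g x ≠ 1} = g ⁻¹' ({1}ᶜ) := rfl
    rw [this]
    exact (isClosed_singleton.preimage hgcont).isOpen_compl
  have hVnull : p V = 0 := by
    have hsub : V ⊆ {x | ¬ κ x B = 1} := by
      intro x hx
      intro hcontra
      exact hx.1 (by rw [hgeq x, hcontra, ENNReal.toReal_one])
    exact measure_mono_null hsub (ae_iff.mp hae)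
  have hVempty : V = ∅ := by
    by_contra hne
    obtain ⟨x, hx⟩ := Set.nonempty_iff_ne_empty.mpr hne
    -- but also p V = ∫ κ x V dp > 0
    have hlint : 0 < ∫⁻ x, κ x V ∂p := by
      rw [lintegral_pos_iff_support (Kernel.measurable_coe κ hVopen.measurableSet)]
      have hsub : Set.range Sum.inl ⊆ Function.support fun x => κ x V := by
        rintro _ ⟨u, rfl⟩
        exact (hirr u _ hVopen Set.inter_subset_right ⟨x, hx⟩).ne'
      have hrange : 0 < p (Set.range Sum.inl) := by
        rcases eq_or_ne (p (Set.range Sum.inl)) 0 with h | h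
        · exfalso
          refine hp0 (le_antisymm ?_ zero_le)
          calc p Set.univ ≤ p (Set.range Sum.inl) + p (Set.range Sum.inl)ᶜ :=
                measure_univ_le_add_compl _
            _ = 0 := by rw [h, hpU, add_zero]
        · exact h.bot_lt
      exact hrange.trans_le (measure_mono hsub)
    rw [← hpI V hVopen.measurableSet] at hlint
    exact hlint.ne' hVnull
  have hgone : ∀ u : U, g (Sum.inl u) = 1 := by
    intro u
    by_contra h
    have : Sum.inl u ∈ V := ⟨h, ⟨u, rfl⟩⟩
    rw [hVempty] at this
    exact this
  intro u
  have := hgone u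
  rw [hgeq] at this
  exact (ENNReal.toReal_eq_one_iff _).mp this

theorem unique_invariant_of_strongFeller_irreducible
    {U : Type*} [TopologicalSpace U] [PolishSpace U]
    [MeasurableSpace (U ⊕ Unit)] [BorelSpace (U ⊕ Unit)]
    (κ : Kernel (U ⊕ Unit) (U ⊕ Unit)) [IsMarkovKernel κ]
    (hSF : IsStrongFeller κ)
    (habs : κ (Sum.inr ()) {Sum.inr ()} = 1)
    (hirr : ∀ u : U, ∀ A : Set (U ⊕ Unit),
      IsOpen A → A ⊆ Set.range Sum.inl → A.Nonempty → 0 < κ (Sum.inl u) A) :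
    ∀ μ ν : Measure (U ⊕ Unit), IsProbabilityMeasure μ → IsProbabilityMeasure ν →
      KernelInvariant κ μ → KernelInvariant κ ν →
      μ (Set.range Sum.inl) = 1 → ν (Set.range Sum.inl) = 1 → μ = ν := by
  intro μ ν hμP hνP hμI hνI hμU hνU
  by_contra hne
  -- nonempty U
  have hUne : Nonempty U := by
    by_contra h
    have : IsEmpty U := not_nonempty_iff.mp h
    rw [Set.range_eq_empty Sum.inl, measure_empty] at hμU
    exact zero_ne_one hμU
  obtain ⟨u0⟩ := hUne
  -- complement of range inl is null
  have hRmeas : MeasurableSet (Set.range (Sum.inl : U → U ⊕ Unit)) :=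
    isOpen_range_inl.measurableSet
  have hμC : μ (Set.range Sum.inl)ᶜ = 0 := by
    rw [measure_compl hRmeas (measure_ne_top μ _), hμU, measure_univ, tsub_self]
  have hνC : ν (Set.range Sum.inl)ᶜ = 0 := by
    rw [measure_compl hRmeas (measure_ne_top ν _), hνU, measure_univ, tsub_self]
  -- Hahn decomposition
  obtain ⟨S, hS, hin, hout⟩ := hahn_decomposition (μ := μ) (ν := ν)
  have htot : μ Set.univ = ν Set.univ := by rw [measure_univ, measure_univ]
  have hle : ν.restrict S ≤ μ.restrict S := by
    refine Measure.le_iff.mpr fun A hA => ?_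
    rw [Measure.restrict_apply hA, Measure.restrict_apply hA]
    exact hin _ (hA.inter hS) Set.inter_subset_right
  have hle' : μ.restrict Sᶜ ≤ ν.restrict Sᶜ := by
    refine Measure.le_iff.mpr fun A hA => ?_
    rw [Measure.restrict_apply hA, Measure.restrict_apply hA]
    exact hout _ (hA.inter hS.compl) Set.inter_subset_right
  set p := μ.restrict S - ν.restrict S with hp
  set q := ν.restrict Sᶜ - μ.restrict Sᶜ with hq
  have hpapply : ∀ A : Set (U ⊕ Unit), MeasurableSet A → p A = μ (A ∩ S) - ν (A ∩ S) := by
    intro A hA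
    rw [hp, Measure.sub_apply hA hle, Measure.restrict_apply hA, Measure.restrict_apply hA]
  have hqapply : ∀ A : Set (U ⊕ Unit), MeasurableSet A → q A = ν (A ∩ Sᶜ) - μ (A ∩ Sᶜ) := by
    intro A hA
    rw [hq, Measure.sub_apply hA hle', Measure.restrict_apply hA, Measure.restrict_apply hA]
  have hple : ∀ A : Set (U ⊕ Unit), MeasurableSet A → p A ≤ μ A := by
    intro A hA
    calc p A = μ (A ∩ S) - ν (A ∩ S) := hpapply A hA
      _ ≤ μ (A ∩ S) := tsub_le_self
      _ ≤ μ A := measure_mono Set.inter_subset_left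
  have hqle : ∀ A : Set (U ⊕ Unit), MeasurableSet A → q A ≤ ν A := by
    intro A hA
    calc q A = ν (A ∩ Sᶜ) - μ (A ∩ Sᶜ) := hqapply A hA
      _ ≤ ν (A ∩ Sᶜ) := tsub_le_self
      _ ≤ ν A := measure_mono Set.inter_subset_left
  have hpfin : p Set.univ ≠ ⊤ :=
    fun h => (measure_ne_top μ Set.univ) (top_le_iff.mp (h ▸ hple _ MeasurableSet.univ))
  have hqfin : q Set.univ ≠ ⊤ :=
    fun h => (measure_ne_top ν Set.univ) (top_le_iff.mp (h ▸ hqle _ MeasurableSet.univ))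
  -- nonzero
  have hp0 : p Set.univ ≠ 0 := by
    intro h
    rw [hpapply _ MeasurableSet.univ, Set.univ_inter, tsub_eq_zero_iff_le] at h
    exact hne (eq_of_hahn μ ν htot hS hin hout h)
  have hq0 : q Set.univ ≠ 0 := by
    intro h
    rw [hqapply _ MeasurableSet.univ, Set.univ_inter, tsub_eq_zero_iff_le] at h
    refine hne (eq_of_hahn ν μ htot.symm hS.compl ?_ ?_ h).symm
    · exact fun t ht hts => hout t ht hts
    · intro t ht hts
      rw [compl_compl] at hts
      exact hin t ht hts
  -- invariance
  have hpI : KernelInvariant κ p := sub_invariant κ μ ν hμI hνI hS hin hout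
  have hqI : KernelInvariant κ q := by
    refine sub_invariant κ ν μ hνI hμI hS.compl ?_ ?_
    · exact fun t ht hts => hout t ht hts
    · intro t ht hts
      rw [compl_compl] at hts
      exact hin t ht hts
  -- full mass on range inl
  have hpU : p (Set.range Sum.inl)ᶜ = 0 :=
    le_antisymm ((hple _ hRmeas.compl).trans hμC.le) zero_le
  have hqU : q (Set.range Sum.inl)ᶜ = 0 :=
    le_antisymm ((hqle _ hRmeas.compl).trans hνC.le) zero_le
  -- p lives on S, q lives on Sᶜ
  have hpS : p Sᶜ = 0 := by
    rw [hpapply _ hS.compl, Set.compl_inter_self, measure_empty, measure_empty, tsub_self]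
  have hqS : q (Sᶜ)ᶜ = 0 := by
    rw [hqapply _ hS.compl.compl, compl_compl, Set.inter_compl_self, measure_empty,
      measure_empty, tsub_self]
  -- apply the key lemma
  have h1 := kernel_eq_one_on_inl κ hSF hirr p hpfin hpI hpU hp0 S hS hpS u0
  have h2 := kernel_eq_one_on_inl κ hSF hirr q hqfin hqI hqU hq0 Sᶜ hS.compl hqS u0
  have h3 : κ (Sum.inl u0) S + κ (Sum.inl u0) Sᶜ = 1 := by
    rw [measure_add_measure_compl hS, measure_univ]
  rw [h1, h2] at h3
  norm_num at h3
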